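/- Let ν be a σ-finite measure on a measurable space 𝒳, and let p, q : 𝒳 → [0,∞) be measurable functions with ∫ p dν = ∫ q dν = 1. Suppose M > 0 satisfies p(x) ≤ M·q(x) for ν-almost every x. Let Q be the measure with density q with respect to ν, let λ be Lebesgue measure on [0,1], and let A = {(x,u) ∈ 𝒳 × [0,1] : M·u·q(x) ≤ p(x)} be the acceptance region. Then (Q ⊗ λ)(A) = 1/M, and for every measurable set B ⊆ 𝒳, (Q ⊗ λ)((B × [0,1]) ∩ A) = (1/M)·∫_B p dν. Consequently the conditional distribution of the first coordinate given acceptance is the measure with density p: (Q ⊗ λ)((B × [0,1]) ∩ A) / (Q ⊗ λ)(A) = ∫_B p dν. (Correctness of rejection sampling.) -/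

import Mathlib

open MeasureTheory
open scoped ENNReal

lemma rejection_slice_eq (M : ℝ) (hM : 0 < M) (px qx : ℝ≥0∞)
    (hd : px ≤ ENNReal.ofReal M * qx) (hqt : qx ≠ ⊤) :
    qx * (volume.restrict (Set.Icc (0:ℝ) 1)) {u : ℝ | ENNReal.ofReal (M * u) * qx ≤ px}
      = ENNReal.ofReal (1/M) * px := by
  rcases eq_or_ne qx 0 with h0 | h0
  · have hpx : px = 0 := le_antisymm (by simpa [h0] using hd) zero_le
    simp [h0, hpx]
  · have hpxt : px ≠ ⊤ :=
      ne_top_of_le_ne_top (by finiteness) hd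
    have hct : px / qx ≠ ⊤ := by
      simp [ENNReal.div_eq_top, h0, hpxt]
    set t : ℝ := (px / qx).toReal / M with ht
    have hset : {u : ℝ | ENNReal.ofReal (M * u) * qx ≤ px} = Set.Iic t := by
      ext u
      simp only [Set.mem_setOf_eq, Set.mem_Iic]
      rw [← ENNReal.le_div_iff_mul_le (Or.inl h0) (Or.inl hqt),
        ENNReal.ofReal_le_iff_le_toReal hct, ht, le_div_iff₀ hM, mul_comm]
    have ht0 : 0 ≤ t := div_nonneg ENNReal.toReal_nonneg hM.le
    have ht1 : t ≤ 1 := by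
      have hle : px / qx ≤ ENNReal.ofReal M :=
        ENNReal.div_le_of_le_mul hd
      have : (px / qx).toReal ≤ M := by
        calc (px/qx).toReal ≤ (ENNReal.ofReal M).toReal := ENNReal.toReal_mono (by finiteness) hle
        _ = M := ENNReal.toReal_ofReal hM.le
      rw [ht, div_le_one hM]
      linarith
    have hmeas : (volume.restrict (Set.Icc (0:ℝ) 1)) (Set.Iic t) = ENNReal.ofReal t := by
      rw [Measure.restrict_apply measurableSet_Iic]
      have : Set.Iic t ∩ Set.Icc (0:ℝ) 1 = Set.Icc 0 t := by
        ext u; simp only [Set.mem_inter_iff, Set.mem_Iic, Set.mem_Icc]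
        constructor
        · rintro ⟨h1, h2, h3⟩; exact ⟨h2, h1⟩
        · rintro ⟨h1, h2⟩; exact ⟨h2, h1, h2.trans ht1⟩
      rw [this, Real.volume_Icc]; simp
    rw [hset, hmeas, ht, div_eq_mul_inv, ← one_div,
      ENNReal.ofReal_mul ENNReal.toReal_nonneg, ENNReal.ofReal_toReal hct]
    rw [← mul_assoc, mul_comm qx (px / qx), ENNReal.div_mul_cancel h0 hqt, mul_comm]

/-- Correctness of rejection sampling: if `p ≤ M·q` (ν-a.e.) for densities `p`, `q`
integrating to one against a σ-finite measure `ν`, `Q` is the measure with density `q`,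
`lam` is Lebesgue measure on `[0,1]`, and `A = {(x,u) : M·u·q(x) ≤ p(x)}` is the
acceptance region, then `(Q ⊗ lam)(A) = 1/M`, for every measurable `B` the acceptance
measure of `B × [0,1]` is `(1/M)·∫_B p dν`, and hence the conditional distribution of
the proposal given acceptance has density `p`. -/
theorem rejection_sampling_correct
    {𝒳 : Type*} [MeasurableSpace 𝒳] (ν : Measure 𝒳) [SigmaFinite ν]
    (p q : 𝒳 → ℝ≥0∞) (hp : Measurable p) (hq : Measurable q)
    (hp1 : ∫⁻ x, p x ∂ν = 1) (hq1 : ∫⁻ x, q x ∂ν = 1)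
    (M : ℝ) (hM : 0 < M)
    (hdom : ∀ᵐ x ∂ν, p x ≤ ENNReal.ofReal M * q x)
    (Q : Measure 𝒳) (hQ : Q = ν.withDensity q)
    (lam : Measure ℝ) (hlam : lam = volume.restrict (Set.Icc (0 : ℝ) 1))
    (A : Set (𝒳 × ℝ))
    (hA : A = {xu : 𝒳 × ℝ | ENNReal.ofReal (M * xu.2) * q xu.1 ≤ p xu.1}) :
    (Q.prod lam) A = ENNReal.ofReal (1 / M) ∧
    (∀ B : Set 𝒳, MeasurableSet B →
      (Q.prod lam) ((B ×ˢ (Set.univ : Set ℝ)) ∩ A)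
        = ENNReal.ofReal (1 / M) * ∫⁻ x in B, p x ∂ν) ∧
    (∀ B : Set 𝒳, MeasurableSet B →
      (Q.prod lam) ((B ×ˢ (Set.univ : Set ℝ)) ∩ A) / (Q.prod lam) A
        = ∫⁻ x in B, p x ∂ν) := by
  classical
  subst hQ hlam hA
  have hAmeas : MeasurableSet {xu : 𝒳 × ℝ | ENNReal.ofReal (M * xu.2) * q xu.1 ≤ p xu.1} := by
    apply measurableSet_le
    · exact ((ENNReal.measurable_ofReal.comp
        ((measurable_const.mul measurable_snd))).mul (hq.comp measurable_fst))
    · exact hp.comp measurable_fst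
  have hqfin : ∀ᵐ x ∂ν, q x ≠ ⊤ := by
    filter_upwards [ae_lt_top hq (by rw [hq1]; exact ENNReal.one_ne_top)] with x hx
    exact hx.ne
  have key : ∀ B : Set 𝒳, MeasurableSet B →
      ((ν.withDensity q).prod (volume.restrict (Set.Icc (0:ℝ) 1)))
        ((B ×ˢ (Set.univ : Set ℝ)) ∩ {xu : 𝒳 × ℝ | ENNReal.ofReal (M * xu.2) * q xu.1 ≤ p xu.1})
        = ENNReal.ofReal (1 / M) * ∫⁻ x in B, p x ∂ν := by
    intro B hB
    rw [Measure.prod_apply ((hB.prod MeasurableSet.univ).inter hAmeas)]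
    have hpre : ∀ x : 𝒳, Prod.mk x ⁻¹'
        ((B ×ˢ (Set.univ : Set ℝ)) ∩ {xu : 𝒳 × ℝ | ENNReal.ofReal (M * xu.2) * q xu.1 ≤ p xu.1})
        = if x ∈ B then {u : ℝ | ENNReal.ofReal (M * u) * q x ≤ p x} else ∅ := by
      intro x
      by_cases hx : x ∈ B <;> simp [Set.preimage, hx, Set.prod]
    calc ∫⁻ x, (volume.restrict (Set.Icc (0:ℝ) 1)) (Prod.mk x ⁻¹'
          ((B ×ˢ (Set.univ : Set ℝ)) ∩ {xu : 𝒳 × ℝ | ENNReal.ofReal (M * xu.2) * q xu.1 ≤ p xu.1}))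
          ∂(ν.withDensity q)
        = ∫⁻ x in B, (volume.restrict (Set.Icc (0:ℝ) 1))
            {u : ℝ | ENNReal.ofReal (M * u) * q x ≤ p x} ∂(ν.withDensity q) := by
          rw [← lintegral_indicator hB]
          congr 1
          ext x
          rw [hpre x]
          by_cases hx : x ∈ B <;> simp [hx, Set.indicator]
      _ = ∫⁻ x in B, q x * (volume.restrict (Set.Icc (0:ℝ) 1))
            {u : ℝ | ENNReal.ofReal (M * u) * q x ≤ p x} ∂ν := by
          rw [restrict_withDensity hB,
            lintegral_withDensity_eq_lintegral_mul_non_measurable _ hq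
              (ae_restrict_of_ae (hqfin.mono fun x hx => hx.lt_top))]
          rfl
      _ = ∫⁻ x in B, ENNReal.ofReal (1 / M) * p x ∂ν := by
          apply lintegral_congr_ae
          filter_upwards [ae_restrict_of_ae hdom, ae_restrict_of_ae hqfin] with x hx hxt
          exact rejection_slice_eq M hM (p x) (q x) hx hxt
      _ = ENNReal.ofReal (1 / M) * ∫⁻ x in B, p x ∂ν := lintegral_const_mul _ hp
  have hMne : ENNReal.ofReal (1 / M) ≠ 0 := by
    simp [ENNReal.ofReal_eq_zero, not_le, hM]
  have hA1 : ((ν.withDensity q).prod (volume.restrict (Set.Icc (0:ℝ) 1)))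
      {xu : 𝒳 × ℝ | ENNReal.ofReal (M * xu.2) * q xu.1 ≤ p xu.1} = ENNReal.ofReal (1 / M) := by
    have := key Set.univ MeasurableSet.univ
    simpa [hp1] using this
  refine ⟨hA1, key, fun B hB => ?_⟩
  rw [key B hB, hA1, mul_comm, mul_div_assoc, ENNReal.div_self hMne ENNReal.ofReal_ne_top, mul_one]
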